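/- Let θ ≤ μ ≤ χ be infinite cardinals with χ ≤ 2^μ. Then there is a family F of functions from χ to μ of cardinality at most μ^{<θ} such that every partial function from χ to μ with domain of size < θ extends to a total function in F. -/
import Mathlib


open Cardinal

universe u

open Set Function

/-- Bound on a sigma type whose fibers are uniformly bounded. -/
private lemma ek_sigma_card_le {ι : Type u} {f : ι → Type u} {a b : Cardinal.{u}}
    (hι : #ι ≤ a) (hf : ∀ i, #(f i) ≤ b) : #(Σ i, f i) ≤ a * b := by
  rw [mk_sigma]
  calc Cardinal.sum (fun i => #(f i)) ≤ Cardinal.sum (fun _ : ι => b) :=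
        Cardinal.sum_le_sum _ _ hf
    _ = #ι * b := Cardinal.sum_const' _ _
    _ ≤ a * b := mul_le_mul_left hι b

/-- The number of subsets of `γ` of size `< θ` is at most `θ * #γ ^< θ`. -/
private lemma ek_mk_small_subsets (γ : Type u) {θ : Cardinal.{u}} (hθ : ℵ₀ ≤ θ) :
    #{s : Set γ // #s < θ} ≤ θ * (#γ ^< θ) := by
  have hθ0 : (0 : Cardinal) < θ := aleph0_pos.trans_le hθ
  have hempty : #(∅ : Set γ) < θ := by rw [mk_emptyCollection]; exact hθ0
  classical
  -- the auxiliary index type, one universe up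
  let T : Type (u + 1) := Σ l : ↥(Iio θ), ULift.{u + 1} (Quotient.out l.1 → γ)
  let Φ : T → ULift.{u + 1} {s : Set γ // #s < θ} := fun t =>
    ULift.up
      (if h : #(Set.range t.2.down) < θ then ⟨Set.range t.2.down, h⟩ else ⟨∅, hempty⟩)
  have hsurj : Surjective Φ := by
    rintro ⟨⟨s, hs⟩⟩
    have hr : Set.range (fun i : Quotient.out (#s) => ((outMkEquiv i : s) : γ)) = s := by
      ext x
      constructor
      · rintro ⟨i, rfl⟩; exact (outMkEquiv i).2
      · intro hx; exact ⟨outMkEquiv.symm ⟨x, hx⟩, by simp⟩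
    refine ⟨⟨⟨#s, hs⟩, ULift.up (fun i => ((outMkEquiv i : s) : γ))⟩, ?_⟩
    have hc : #(Set.range (fun i : Quotient.out (#s) => ((outMkEquiv i : s) : γ))) < θ := by
      rw [hr]; exact hs
    show ULift.up (dite _ _ _) = _
    rw [dif_pos hc]
    exact congrArg ULift.up (Subtype.ext hr)
  have hIio : #(↥(Iio θ)) ≤ Cardinal.lift.{u + 1} θ := by
    have hinj : Injective (fun c : ↥(Iio θ) =>
        (⟨c.1.ord, Cardinal.ord_lt_ord.2 c.2⟩ : ↥(Iio θ.ord))) := by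
      intro a b h
      apply Subtype.ext
      exact Cardinal.ord_injective (congrArg Subtype.val h)
    calc #(↥(Iio θ)) ≤ #(↥(Iio θ.ord)) := mk_le_of_injective hinj
      _ = Cardinal.lift.{u + 1} θ.ord.card := Ordinal.mk_Iio_ordinal θ.ord
      _ = Cardinal.lift.{u + 1} θ := by rw [Cardinal.card_ord]
  have key : Cardinal.lift.{u + 1} #{s : Set γ // #s < θ}
      ≤ Cardinal.lift.{u + 1} (θ * (#γ ^< θ)) := by
    calc Cardinal.lift.{u + 1} #{s : Set γ // #s < θ}
        = #(ULift.{u + 1} {s : Set γ // #s < θ}) := (mk_uLift _).symm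
      _ ≤ #T := mk_le_of_surjective hsurj
      _ = Cardinal.sum (fun l : ↥(Iio θ) => #(ULift.{u + 1} (Quotient.out l.1 → γ))) :=
        mk_sigma _
      _ = Cardinal.sum (fun l : ↥(Iio θ) => Cardinal.lift.{u + 1} (#γ ^ l.1)) := by
        congr 1
        funext l
        rw [mk_uLift, ← power_def, mk_out]
      _ ≤ Cardinal.sum (fun _ : ↥(Iio θ) => Cardinal.lift.{u + 1} (#γ ^< θ)) :=
        Cardinal.sum_le_sum _ _ (fun l => Cardinal.lift_le.2 (le_powerlt _ l.2))
      _ = #(↥(Iio θ)) * Cardinal.lift.{u + 1} (#γ ^< θ) := Cardinal.sum_const' _ _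
      _ ≤ Cardinal.lift.{u + 1} θ * Cardinal.lift.{u + 1} (#γ ^< θ) :=
        mul_le_mul_left hIio _
      _ = Cardinal.lift.{u + 1} (θ * (#γ ^< θ)) := (Cardinal.lift_mul _ _).symm
  exact Cardinal.lift_le.1 key

/-- Engelking–Karłowicz: for infinite cardinals `θ ≤ μ ≤ χ ≤ 2^μ` (here `μ = #β`,
`χ = #α`), there is a family `F` of total functions `α → β` of size at most `μ^{<θ}` such
that every partial function `α ⇀ β` with domain of size `< θ` extends to a member of `F`. -/
theorem stmt_9 {α β : Type u} (θ : Cardinal.{u}) (hθ : ℵ₀ ≤ θ)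
    (hθμ : θ ≤ #β) (hμχ : #β ≤ #α) (hχ : #α ≤ 2 ^ #β) :
    ∃ F : Set (α → β), #F ≤ #β ^< θ ∧
      ∀ s : Set α, #s < θ → ∀ p : α → β, ∃ f ∈ F, ∀ x ∈ s, f x = p x := by
  classical
  -- basic facts
  obtain ⟨e⟩ : Nonempty (α ↪ Set β) := (le_def _ _).1 (by rwa [mk_set])
  obtain ⟨b0⟩ : Nonempty β :=
    mk_ne_zero_iff.1 (aleph0_pos.trans_le (hθ.trans hθμ)).ne'
  set κ := #β ^< θ with hκdef
  have h1θ : (1 : Cardinal) < θ := one_lt_aleph0.trans_le hθ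
  have hβκ : #β ≤ κ := by
    rw [← power_one #β]; exact le_powerlt _ h1θ
  have hθκ : θ ≤ κ := hθμ.trans hβκ
  have hℵκ : ℵ₀ ≤ κ := hθ.trans hθκ
  have hκκ : κ * κ = κ := mul_eq_self hℵκ
  have h2β : (2 : Cardinal) ≤ #β := by
    have : (2 : Cardinal) < ℵ₀ := by simpa using nat_lt_aleph0 2
    exact this.le.trans (hθ.trans hθμ)
  -- the index type of the family
  let D : Type u :=
    Σ I : {I : Set β // #I < θ}, Σ W : {W : Set (Set ↥I.1) // #W < θ}, (↥W.1 → β) × β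
  let Φ : D → α → β := fun d x =>
    if h : {i : ↥d.1.1 | (i : β) ∈ e x} ∈ d.2.1.1 then d.2.2.1 ⟨_, h⟩ else d.2.2.2
  refine ⟨Set.range Φ, ?_, ?_⟩
  · -- Cardinality bound
    have hA : #{I : Set β // #I < θ} ≤ κ := by
      calc #{I : Set β // #I < θ} ≤ θ * (#β ^< θ) := ek_mk_small_subsets β hθ
        _ ≤ κ * κ := mul_le_mul' hθκ le_rfl
        _ = κ := hκκ
    have hD : #D ≤ κ := by
      have hfib : ∀ I : {I : Set β // #I < θ},
          #(Σ W : {W : Set (Set ↥I.1) // #W < θ}, (↥W.1 → β) × β) ≤ κ := by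
        intro I
        have hW : #{W : Set (Set ↥I.1) // #W < θ} ≤ κ := by
          have hpow : #(Set ↥I.1) ^< θ ≤ κ := by
            rw [powerlt_le]
            intro x hx
            have hmul : #↥I.1 * x < θ := mul_lt_of_lt hθ I.2 hx
            calc #(Set ↥I.1) ^ x = (2 ^ #↥I.1) ^ x := by rw [mk_set]
              _ = 2 ^ (#↥I.1 * x) := by rw [power_mul]
              _ ≤ #β ^ (#↥I.1 * x) := power_le_power_right h2β
              _ ≤ κ := le_powerlt _ hmul
          calc #{W : Set (Set ↥I.1) // #W < θ} ≤ θ * (#(Set ↥I.1) ^< θ) :=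
                ek_mk_small_subsets _ hθ
            _ ≤ κ * κ := mul_le_mul' hθκ hpow
            _ = κ := hκκ
        have hWfib : ∀ W : {W : Set (Set ↥I.1) // #W < θ}, #((↥W.1 → β) × β) ≤ κ := by
          intro W
          have h1 : #(↥W.1 → β) ≤ κ := by
            rw [← power_def]
            exact le_powerlt _ W.2
          calc #((↥W.1 → β) × β) = #(↥W.1 → β) * #β := by
                rw [mk_prod, lift_id, lift_id]
            _ ≤ κ * κ := mul_le_mul' h1 hβκ
            _ = κ := hκκ
        calc #(Σ W : {W : Set (Set ↥I.1) // #W < θ}, (↥W.1 → β) × β) ≤ κ * κ :=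
              ek_sigma_card_le hW hWfib
          _ = κ := hκκ
      calc #D ≤ κ * κ := ek_sigma_card_le hA hfib
        _ = κ := hκκ
    exact mk_range_le.trans hD
  · -- Extension property
    intro s hs p
    -- a separating family of coordinates
    have sep : ∀ {x y : α}, e x ≠ e y → ∃ i : β, ¬(i ∈ e x ↔ i ∈ e y) := by
      intro x y hxy
      by_contra h
      push_neg at h
      exact hxy (Set.ext h)
    let c : ↥s × ↥s → β := fun q =>
      if h : e q.1.1 = e q.2.1 then b0 else (sep h).choose
    let I : Set β := Set.range c
    have hI : #I < θ := by
      have hss : #(↥s × ↥s) < θ := by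
        rw [mk_prod, lift_id]
        exact mul_lt_of_lt hθ hs hs
      exact mk_range_le.trans_lt hss
    let tr : ↥s → Set ↥I := fun y => {i : ↥I | (i : β) ∈ e y.1}
    have htr : Injective tr := by
      intro x y hxy
      by_contra hne
      have hne' : e x.1 ≠ e y.1 := fun hh => hne (Subtype.ext (e.injective hh))
      have hspec := (sep hne').choose_spec
      have hiI : (sep hne').choose ∈ I := ⟨(x, y), dif_neg hne'⟩
      have h2 := Set.ext_iff.mp hxy ⟨(sep hne').choose, hiI⟩
      exact hspec h2
    let W : Set (Set ↥I) := Set.range tr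
    have hW : #W < θ := mk_range_le.trans_lt hs
    let g : ↥W → β := fun w => p (w.2.choose).1
    let d : D := ⟨⟨I, hI⟩, ⟨W, hW⟩, g, b0⟩
    refine ⟨Φ d, ⟨d, rfl⟩, ?_⟩
    intro x hx
    have ht : {i : ↥I | (i : β) ∈ e x} ∈ W := ⟨⟨x, hx⟩, rfl⟩
    show (if h : {i : ↥I | (i : β) ∈ e x} ∈ W then g ⟨_, h⟩ else b0) = p x
    rw [dif_pos ht]
    show p (ht.choose).1 = p x
    have hch : ht.choose = ⟨x, hx⟩ := htr ht.choose_spec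
    rw [hch]
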